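/- The exact Gaussian-approximation function φ is continuous on [0,∞), strictly decreasing on [0,∞), satisfies φ(0) = 1 (equivalently, φ(t) → 1 as t → 0⁺), and φ(t) → 0 as t → ∞. -/

import Mathlib

open Real MeasureTheory Filter Set Topology

/-- The exact Gaussian-approximation check-node function for polar codes:
`φ(t) = 1 − (4πt)^{−1/2} ∫_ℝ tanh(z/2)·exp(−(z−t)²/(4t)) dz` for `t > 0`, with `φ(0) = 1`. -/
noncomputable def phiGA (t : ℝ) : ℝ :=
  if t = 0 then 1
  else 1 - (Real.sqrt (4 * Real.pi * t))⁻¹ *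
    ∫ z : ℝ, Real.tanh (z / 2) * Real.exp (-(z - t) ^ 2 / (4 * t))



-- basic tanh lemmas
lemma tanh_formula (x : ℝ) : Real.tanh x = 1 - 2 / (Real.exp (2*x) + 1) := by
  have h1 : Real.exp x > 0 := Real.exp_pos x
  have h3 : Real.exp (2*x) + 1 > 0 := by positivity
  rw [Real.tanh_eq_sinh_div_cosh, Real.sinh_eq, Real.cosh_eq, Real.exp_neg,
    show (2:ℝ)*x = x + x by ring, Real.exp_add]
  field_simp
  ring

lemma tanh_lt_one' (x : ℝ) : Real.tanh x < 1 := by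
  rw [tanh_formula]
  have : 0 < 2 / (Real.exp (2*x) + 1) := by positivity
  linarith

lemma neg_one_lt_tanh' (x : ℝ) : -1 < Real.tanh x := by
  rw [tanh_formula]
  have h : (0:ℝ) < Real.exp (2*x) := Real.exp_pos _
  have : 2 / (Real.exp (2*x) + 1) < 2 := by
    rw [div_lt_iff₀ (by positivity)]
    nlinarith
  linarith

lemma abs_tanh_le_one (x : ℝ) : |Real.tanh x| ≤ 1 :=
  abs_le.2 ⟨(neg_one_lt_tanh' x).le, (tanh_lt_one' x).le⟩

lemma continuous_tanh' : Continuous Real.tanh := by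
  have : Real.tanh = fun x => Real.sinh x / Real.cosh x :=
    funext fun x => Real.tanh_eq_sinh_div_cosh x
  rw [this]
  exact Real.continuous_sinh.div Real.continuous_cosh fun x => (Real.cosh_pos x).ne'

lemma hasDerivAt_tanh' (x : ℝ) : HasDerivAt Real.tanh (1 / Real.cosh x ^ 2) x := by
  have h := (Real.hasDerivAt_sinh x).div (Real.hasDerivAt_cosh x) (Real.cosh_pos x).ne'
  have hfun : (fun y => Real.sinh y / Real.cosh y) = Real.tanh :=
    funext fun y => (Real.tanh_eq_sinh_div_cosh y).symm
  rw [show (Real.sinh / Real.cosh) = Real.tanh from hfun] at h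
  refine h.congr_deriv ?_
  have := Real.cosh_sq_sub_sinh_sq x
  field_simp
  nlinarith [this]

lemma tendsto_tanh_atTop' : Tendsto Real.tanh atTop (𝓝 1) := by
  have h : Tendsto (fun x : ℝ => 1 - 2 / (Real.exp (2*x) + 1)) atTop (𝓝 1) := by
    have h2 : Tendsto (fun x : ℝ => Real.exp (2*x) + 1) atTop atTop :=
      (Real.tendsto_exp_atTop.comp (tendsto_id.const_mul_atTop two_pos)).atTop_add tendsto_const_nhds
    have h3 : Tendsto (fun x : ℝ => 2 / (Real.exp (2*x) + 1)) atTop (𝓝 0) :=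
      Tendsto.div_atTop tendsto_const_nhds h2
    simpa using Tendsto.sub (tendsto_const_nhds : Tendsto (fun _ : ℝ => (1:ℝ)) atTop (𝓝 1)) h3
  exact h.congr fun x => (tanh_formula x).symm

-- gaussian domination
lemma integrable_of_gaussian_bound {g : ℝ → ℝ} (hg : Continuous g) {C b : ℝ} (hb : 0 < b)
    (h : ∀ u, |g u| ≤ C * Real.exp (-b * u ^ 2)) : Integrable g :=
  ((integrable_exp_neg_mul_sq hb).const_mul C).mono' hg.aestronglyMeasurable
    (Eventually.of_forall fun u => by simpa [Real.norm_eq_abs] using h u)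

lemma abs_mul_exp_le (u : ℝ) : |u| * Real.exp (-u ^ 2) ≤ Real.exp (-(1/2) * u ^ 2) := by
  have h1 : |u| ≤ Real.exp ((1/2) * u ^ 2) := by
    have h2 : (1/2) * u ^ 2 + 1 ≤ Real.exp ((1/2) * u ^ 2) := Real.add_one_le_exp _
    nlinarith [sq_nonneg (|u| - 1), sq_abs u]
  calc |u| * Real.exp (-u ^ 2) ≤ Real.exp ((1/2) * u ^ 2) * Real.exp (-u ^ 2) := by
        exact mul_le_mul_of_nonneg_right h1 (Real.exp_pos _).le
    _ = Real.exp (-(1/2) * u ^ 2) := by rw [← Real.exp_add]; ring_nf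



noncomputable def Kf (t u : ℝ) : ℝ :=
  Real.tanh ((t + 2 * Real.sqrt t * u) / 2) * Real.exp (-u ^ 2)

noncomputable def Jf (t : ℝ) : ℝ := ∫ u : ℝ, Kf t u


lemma continuous_K (t : ℝ) : Continuous (Kf t) := by
  unfold Kf
  exact (continuous_tanh'.comp (by continuity)).mul (by continuity)

lemma K_bound (t u : ℝ) : |Kf t u| ≤ 1 * Real.exp (-1 * u ^ 2) := by
  unfold Kf
  rw [abs_mul, abs_of_pos (Real.exp_pos _), one_mul, neg_one_mul]
  exact mul_le_of_le_one_left (Real.exp_pos _).le (abs_tanh_le_one _)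

lemma integrable_K (t : ℝ) : Integrable (Kf t) :=
  integrable_of_gaussian_bound (continuous_K t) one_pos (K_bound t)

lemma phi_eq {t : ℝ} (ht : 0 < t) :
    phiGA t = 1 - (Real.sqrt Real.pi)⁻¹ * Jf t := by
  have hs : (0:ℝ) < Real.sqrt t := Real.sqrt_pos.2 ht
  have hst : Real.sqrt t ^ 2 = t := Real.sq_sqrt ht.le
  set f : ℝ → ℝ := fun z => Real.tanh (z / 2) * Real.exp (-(z - t) ^ 2 / (4 * t)) with hf
  have h1 : ∀ u : ℝ, Kf t u = f (2 * Real.sqrt t * u + t) := by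
    intro u
    unfold Kf
    rw [hf]
    congr 2
    · ring
    · rw [show 2 * Real.sqrt t * u + t - t = 2 * Real.sqrt t * u by ring]
      rw [eq_div_iff (by positivity : (4:ℝ) * t ≠ 0)]
      nlinarith [hst]
  have h2 : Jf t = |(2 * Real.sqrt t)⁻¹| * ∫ z, f z := by
    unfold Jf
    simp_rw [h1]
    rw [show (fun u : ℝ => f (2 * Real.sqrt t * u + t)) = fun u : ℝ => (fun x => f (x + t)) (2 * Real.sqrt t * u) from rfl]
    rw [Measure.integral_comp_mul_left (fun x => f (x + t)) (2 * Real.sqrt t)]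
    rw [integral_add_right_eq_self f t]
    simp [smul_eq_mul]
  have habs : |(2 * Real.sqrt t)⁻¹| = (2 * Real.sqrt t)⁻¹ := abs_of_pos (by positivity)
  have h3 : (∫ z, f z) = 2 * Real.sqrt t * Jf t := by
    rw [h2, habs]
    field_simp
  have h4 : Real.sqrt (4 * Real.pi * t) = 2 * Real.sqrt Real.pi * Real.sqrt t := by
    rw [show (4:ℝ) * Real.pi * t = (2*Real.sqrt Real.pi*Real.sqrt t)^2 by
      have := Real.sq_sqrt Real.pi_pos.le
      nlinarith [hst]]
    exact Real.sqrt_sq (by positivity)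
  unfold phiGA
  rw [if_neg ht.ne', ← hf, h3, h4]
  have hpi : (0:ℝ) < Real.sqrt Real.pi := Real.sqrt_pos.2 Real.pi_pos
  congr 1
  field_simp



lemma integrable_gauss : Integrable (fun u : ℝ => Real.exp (-u ^ 2)) := by
  have := integrable_exp_neg_mul_sq (b := (1:ℝ)) one_pos
  simpa using this

lemma K_bound' (t u : ℝ) : ‖Kf t u‖ ≤ Real.exp (-u ^ 2) := by
  have := K_bound t u
  rw [Real.norm_eq_abs]
  simpa using this

lemma J_tendsto_zero : Tendsto Jf (𝓝[>] (0:ℝ)) (𝓝 0) := by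
  have h : Tendsto (fun t => ∫ u : ℝ, Kf t u) (𝓝[>] (0:ℝ)) (𝓝 (∫ _ : ℝ, (0:ℝ))) := by
    apply tendsto_integral_filter_of_dominated_convergence (fun u => Real.exp (-u ^ 2))
    · exact Eventually.of_forall fun t => (continuous_K t).aestronglyMeasurable
    · exact Eventually.of_forall fun t => Eventually.of_forall fun u => K_bound' t u
    · exact integrable_gauss
    · refine Eventually.of_forall fun u => ?_
      have hc : Continuous fun t : ℝ => Kf t u := by
        unfold Kf
        exact (continuous_tanh'.comp (by continuity)).mul continuous_const
      have h0 : Kf 0 u = 0 := by simp [Kf]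
      have := hc.tendsto 0
      rw [h0] at this
      exact this.mono_left nhdsWithin_le_nhds
  simpa [show Jf = fun t => ∫ u : ℝ, Kf t u from rfl] using h

lemma J_tendsto_sqrt_pi : Tendsto Jf atTop (𝓝 (Real.sqrt Real.pi)) := by
  have h : Tendsto (fun t => ∫ u : ℝ, Kf t u) atTop (𝓝 (∫ u : ℝ, Real.exp (-u ^ 2))) := by
    apply tendsto_integral_filter_of_dominated_convergence (fun u => Real.exp (-u ^ 2))
    · exact Eventually.of_forall fun t => (continuous_K t).aestronglyMeasurable
    · exact Eventually.of_forall fun t => Eventually.of_forall fun u => K_bound' t u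
    · exact integrable_gauss
    · refine Eventually.of_forall fun u => ?_
      have harg : Tendsto (fun t : ℝ => (t + 2 * Real.sqrt t * u) / 2) atTop atTop := by
        apply Tendsto.atTop_div_const two_pos
        apply tendsto_atTop_mono' _ _ (tendsto_id.atTop_div_const two_pos)
        filter_upwards [eventually_ge_atTop (16 * u ^ 2)] with t ht
        have h0 : (0:ℝ) ≤ t := le_trans (by positivity) ht
        have hs : Real.sqrt t ^ 2 = t := Real.sq_sqrt h0
        have h4 : 4 * |u| ≤ Real.sqrt t := by
          have : Real.sqrt (16 * u ^ 2) ≤ Real.sqrt t := Real.sqrt_le_sqrt ht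
          rwa [show (16:ℝ) * u ^ 2 = (4 * |u|) ^ 2 by rw [mul_pow, sq_abs]; norm_num,
            Real.sqrt_sq (by positivity)] at this
        simp only [id]
        nlinarith [mul_nonneg (Real.sqrt_nonneg t) (by linarith [neg_abs_le u] : (0:ℝ) ≤ u + |u|),
          mul_nonneg (sub_nonneg.2 h4) (Real.sqrt_nonneg t)]
      have := (tendsto_tanh_atTop'.comp harg).mul_const (Real.exp (-u ^ 2))
      simpa [Kf] using this
  have hval : (∫ u : ℝ, Real.exp (-u ^ 2)) = Real.sqrt Real.pi := by
    have := integral_gaussian (1:ℝ)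
    simpa using this
  rw [← hval]
  exact h




noncomputable def Kd (t u : ℝ) : ℝ :=
  1 / Real.cosh ((t + 2 * Real.sqrt t * u) / 2) ^ 2 * ((1 + u / Real.sqrt t) / 2)
    * Real.exp (-u ^ 2)

lemma hasDerivAt_K (u : ℝ) {x : ℝ} (hx : 0 < x) :
    HasDerivAt (fun t => Kf t u) (Kd x u) x := by
  have hsx : Real.sqrt x ≠ 0 := (Real.sqrt_pos.2 hx).ne'
  have h1 : HasDerivAt (fun t : ℝ => (t + 2 * Real.sqrt t * u) / 2)
      ((1 + u / Real.sqrt x) / 2) x := by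
    have hsq : HasDerivAt Real.sqrt (1 / (2 * Real.sqrt x)) x := Real.hasDerivAt_sqrt hx.ne'
    have h2 : HasDerivAt (fun t : ℝ => 2 * Real.sqrt t * u)
        (2 * (1 / (2 * Real.sqrt x)) * u) x := (hsq.const_mul 2).mul_const u
    have h3 := ((hasDerivAt_id x).add h2).div_const 2
    refine h3.congr_deriv ?_
    ring
  have h4 := ((hasDerivAt_tanh' _).comp x h1).mul_const (Real.exp (-u ^ 2))
  exact h4

lemma continuous_cosh_term (t : ℝ) :
    Continuous fun u : ℝ => 1 / Real.cosh ((t + 2 * Real.sqrt t * u) / 2) ^ 2 :=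
  continuous_const.div ((Real.continuous_cosh.comp (by continuity)).pow 2)
    fun u => pow_ne_zero 2 (Real.cosh_pos _).ne'

lemma inv_cosh_sq_le_one (y : ℝ) : 1 / Real.cosh y ^ 2 ≤ 1 := by
  have h := Real.one_le_cosh y
  rw [div_le_one (by positivity)]
  nlinarith

lemma continuous_Kd (t : ℝ) : Continuous (Kd t) := by
  unfold Kd
  exact ((continuous_cosh_term t).mul (by continuity)).mul (by continuity)

lemma Kd_bound {a : ℝ} (ha : 0 < a) {x : ℝ} (hx : a ≤ x) (u : ℝ) :
    ‖Kd x u‖ ≤ (1 + |u| / Real.sqrt a) / 2 * Real.exp (-u ^ 2) := by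
  have hx0 : 0 < x := lt_of_lt_of_le ha hx
  have hsa : 0 < Real.sqrt a := Real.sqrt_pos.2 ha
  have hsx : 0 < Real.sqrt x := Real.sqrt_pos.2 hx0
  set y := (x + 2 * Real.sqrt x * u) / 2
  have h1 : |1 / Real.cosh y ^ 2| ≤ 1 := by
    rw [abs_of_pos (by positivity)]
    exact inv_cosh_sq_le_one y
  have h2 : |(1 + u / Real.sqrt x) / 2| ≤ (1 + |u| / Real.sqrt a) / 2 := by
    rw [abs_div, abs_two]
    have : |1 + u / Real.sqrt x| ≤ 1 + |u| / Real.sqrt a := by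
      calc |1 + u / Real.sqrt x| ≤ |(1:ℝ)| + |u / Real.sqrt x| := abs_add_le _ _
        _ = 1 + |u| / Real.sqrt x := by rw [abs_one, abs_div, abs_of_pos hsx]
        _ ≤ 1 + |u| / Real.sqrt a := by
            gcongr
    linarith [this]
  rw [Real.norm_eq_abs]
  unfold Kd
  rw [abs_mul, abs_mul, abs_of_pos (Real.exp_pos _)]
  have hb : |1 / Real.cosh y ^ 2| * |(1 + u / Real.sqrt x) / 2|
      ≤ (1 + |u| / Real.sqrt a) / 2 := by
    calc |1 / Real.cosh y ^ 2| * |(1 + u / Real.sqrt x) / 2|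
        ≤ 1 * ((1 + |u| / Real.sqrt a) / 2) := by
          apply mul_le_mul h1 h2 (abs_nonneg _) zero_le_one
      _ = (1 + |u| / Real.sqrt a) / 2 := one_mul _
  exact mul_le_mul_of_nonneg_right hb (Real.exp_pos _).le

lemma integrable_bound {a : ℝ} (ha : 0 < a) :
    Integrable (fun u : ℝ => (1 + |u| / Real.sqrt a) / 2 * Real.exp (-u ^ 2)) := by
  have hsa : 0 < Real.sqrt a := Real.sqrt_pos.2 ha
  apply integrable_of_gaussian_bound (C := 1/2 + 1/(2 * Real.sqrt a)) (b := 1/2)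
  · exact ((continuous_const.add (continuous_abs.div_const _)).div_const 2).mul (by continuity)
  · norm_num
  · intro u
    have h0 : (0:ℝ) ≤ (1 + |u| / Real.sqrt a) / 2 * Real.exp (-u ^ 2) := by positivity
    rw [abs_of_nonneg h0]
    have e1 : Real.exp (-u ^ 2) ≤ Real.exp (-(1/2) * u ^ 2) := by
      apply Real.exp_le_exp.2; nlinarith [sq_nonneg u]
    have e2 := abs_mul_exp_le u
    have expand : (1 + |u| / Real.sqrt a) / 2 * Real.exp (-u ^ 2)
        = (1/2) * Real.exp (-u ^ 2) + (1/(2 * Real.sqrt a)) * (|u| * Real.exp (-u ^ 2)) := by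
      field_simp
    rw [expand]
    have : (1/2 : ℝ) * Real.exp (-u ^ 2) ≤ (1/2) * Real.exp (-(1/2) * u ^ 2) := by linarith
    have h2 : (1/(2 * Real.sqrt a)) * (|u| * Real.exp (-u ^ 2))
        ≤ (1/(2 * Real.sqrt a)) * Real.exp (-(1/2) * u ^ 2) := by
      apply mul_le_mul_of_nonneg_left e2 (by positivity)
    calc (1/2 : ℝ) * Real.exp (-u ^ 2) + (1/(2 * Real.sqrt a)) * (|u| * Real.exp (-u ^ 2))
        ≤ (1/2) * Real.exp (-(1/2) * u ^ 2) + (1/(2 * Real.sqrt a)) * Real.exp (-(1/2) * u ^ 2) := by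
          linarith
      _ = (1/2 + 1/(2 * Real.sqrt a)) * Real.exp (-(1/2) * u ^ 2) := by ring

lemma J_hasDerivAt {t : ℝ} (ht : 0 < t) :
    Integrable (Kd t) ∧ HasDerivAt Jf (∫ u : ℝ, Kd t u) t := by
  have ha : (0:ℝ) < t/2 := by linarith
  have h := hasDerivAt_integral_of_dominated_loc_of_deriv_le (μ := volume)
    (F := fun x u => Kf x u) (F' := fun x u => Kd x u) (x₀ := t)
    (bound := fun u => (1 + |u| / Real.sqrt (t/2)) / 2 * Real.exp (-u ^ 2))
    (s := Metric.ball t (t/2)) (Metric.ball_mem_nhds t (by positivity))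
    (Eventually.of_forall fun x => (continuous_K x).aestronglyMeasurable)
    (integrable_K t)
    (continuous_Kd t).aestronglyMeasurable
    (Eventually.of_forall fun u => fun x hx => by
      have hx2 : t/2 ≤ x := by
        have := Metric.mem_ball.1 hx
        rw [Real.dist_eq, abs_sub_lt_iff] at this
        linarith [this.2]
      exact Kd_bound ha hx2 u)
    (integrable_bound ha)
    (Eventually.of_forall fun u => fun x hx => by
      have hx2 : 0 < x := by
        have := Metric.mem_ball.1 hx
        rw [Real.dist_eq, abs_sub_lt_iff] at this
        linarith [this.2]
      exact hasDerivAt_K u hx2)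
  exact h




section IBP
variable (t : ℝ)

noncomputable def θf (u : ℝ) : ℝ := (t + 2 * Real.sqrt t * u) / 2
noncomputable def Gf (u : ℝ) : ℝ := Real.exp (-u ^ 2) / Real.cosh (θf t u) ^ 2
noncomputable def Wf (u : ℝ) : ℝ :=
  (-(Real.sqrt t) * Real.tanh (θf t u) * (1 / Real.cosh (θf t u) ^ 2)
    - u * (1 / Real.cosh (θf t u) ^ 2)) * (2 * Real.exp (-u ^ 2))

noncomputable def g0 (u : ℝ) : ℝ := 1 / Real.cosh (θf t u) ^ 2 * Real.exp (-u ^ 2)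
noncomputable def g1 (u : ℝ) : ℝ :=
  Real.tanh (θf t u) * (1 / Real.cosh (θf t u) ^ 2) * Real.exp (-u ^ 2)
noncomputable def g2 (u : ℝ) : ℝ := u * (1 / Real.cosh (θf t u) ^ 2) * Real.exp (-u ^ 2)

lemma continuous_θ : Continuous (θf t) := by unfold θf; continuity

lemma hasDerivAt_G (u : ℝ) : HasDerivAt (Gf t) (Wf t u) u := by
  have harg : HasDerivAt (θf t) (Real.sqrt t) u := by
    have h0 : HasDerivAt (fun u : ℝ => t + 2 * Real.sqrt t * u) (2 * Real.sqrt t) u := by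
      simpa using ((hasDerivAt_id u).const_mul (2 * Real.sqrt t)).const_add t
    have h2 := h0.div_const 2
    have : 2 * Real.sqrt t / 2 = Real.sqrt t := by ring
    rw [this] at h2
    exact h2
  have hc : HasDerivAt (fun u => Real.cosh (θf t u))
      (Real.sinh (θf t u) * Real.sqrt t) u := (Real.hasDerivAt_cosh _).comp u harg
  have hc2 : HasDerivAt (fun u => Real.cosh (θf t u) ^ 2)
      (2 * Real.cosh (θf t u) * (Real.sinh (θf t u) * Real.sqrt t)) u := by
    simpa using hc.fun_pow 2
  have he : HasDerivAt (fun u : ℝ => Real.exp (-u ^ 2)) (Real.exp (-u ^ 2) * (-(2 * u))) u := by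
    have hinner : HasDerivAt (fun u : ℝ => -u ^ 2) (-(2 * u)) u := by
      simpa using (hasDerivAt_pow 2 u).fun_neg
    exact (Real.hasDerivAt_exp _).comp u hinner
  have hcne : Real.cosh (θf t u) ≠ 0 := (Real.cosh_pos _).ne'
  have hne : Real.cosh (θf t u) ^ 2 ≠ 0 := pow_ne_zero 2 hcne
  have hd := he.div hc2 hne
  refine hd.congr_deriv ?_
  unfold Wf
  rw [Real.tanh_eq_sinh_div_cosh]
  field_simp
  ring

lemma continuous_W : Continuous (Wf t) := by
  unfold Wf
  apply Continuous.mul _ (by continuity)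
  apply Continuous.sub
  · exact (continuous_const.mul (continuous_tanh'.comp (continuous_θ t))).mul
      (continuous_cosh_term t)
  · exact continuous_id.mul (continuous_cosh_term t)

lemma W_bound (u : ℝ) : |Wf t u| ≤ (2 * Real.sqrt t + 2) * Real.exp (-(1/2) * u ^ 2) := by
  have hst : 0 ≤ Real.sqrt t := Real.sqrt_nonneg t
  have hc : 0 < 1 / Real.cosh (θf t u) ^ 2 := by positivity
  have hc1 : 1 / Real.cosh (θf t u) ^ 2 ≤ 1 := inv_cosh_sq_le_one _
  have ht1 : |Real.tanh (θf t u)| ≤ 1 := abs_tanh_le_one _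
  have e1 : Real.exp (-u ^ 2) ≤ Real.exp (-(1/2) * u ^ 2) := by
    apply Real.exp_le_exp.2; nlinarith [sq_nonneg u]
  have e2 := abs_mul_exp_le u
  have key : |Wf t u| ≤ (Real.sqrt t + |u|) * (2 * Real.exp (-u ^ 2)) := by
    unfold Wf
    rw [abs_mul, abs_of_pos (by positivity : (0:ℝ) < 2 * Real.exp (-u ^ 2))]
    apply mul_le_mul_of_nonneg_right _ (by positivity)
    calc |(-(Real.sqrt t) * Real.tanh (θf t u) * (1 / Real.cosh (θf t u) ^ 2)
        - u * (1 / Real.cosh (θf t u) ^ 2))|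
        ≤ |(-(Real.sqrt t)) * Real.tanh (θf t u) * (1 / Real.cosh (θf t u) ^ 2)|
          + |u * (1 / Real.cosh (θf t u) ^ 2)| := abs_sub _ _
      _ ≤ Real.sqrt t + |u| := by
          rw [abs_mul, abs_mul, abs_mul, abs_neg, abs_of_nonneg hst,
            abs_of_pos hc]
          have b1 : Real.sqrt t * |Real.tanh (θf t u)| * (1 / Real.cosh (θf t u) ^ 2)
              ≤ Real.sqrt t * 1 * 1 := by
            apply mul_le_mul _ hc1 hc.le (by positivity)
            exact mul_le_mul_of_nonneg_left ht1 hst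
          have b2 : |u| * (1 / Real.cosh (θf t u) ^ 2) ≤ |u| * 1 :=
            mul_le_mul_of_nonneg_left hc1 (abs_nonneg u)
          nlinarith [abs_nonneg u]
  calc |Wf t u| ≤ (Real.sqrt t + |u|) * (2 * Real.exp (-u ^ 2)) := key
    _ = 2 * Real.sqrt t * Real.exp (-u ^ 2) + 2 * (|u| * Real.exp (-u ^ 2)) := by ring
    _ ≤ 2 * Real.sqrt t * Real.exp (-(1/2) * u ^ 2) + 2 * Real.exp (-(1/2) * u ^ 2) := by
        have := mul_le_mul_of_nonneg_left e1 (by positivity : (0:ℝ) ≤ 2 * Real.sqrt t)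
        linarith
    _ = (2 * Real.sqrt t + 2) * Real.exp (-(1/2) * u ^ 2) := by ring

lemma integrable_W : Integrable (Wf t) :=
  integrable_of_gaussian_bound (continuous_W t) (by norm_num : (0:ℝ) < 1/2) (W_bound t)

lemma G_norm_bound (u : ℝ) : ‖Gf t u‖ ≤ Real.exp (-u ^ 2) := by
  rw [Real.norm_eq_abs]
  unfold Gf
  rw [abs_div, abs_of_pos (Real.exp_pos _),
    abs_of_pos (by positivity : (0:ℝ) < Real.cosh (θf t u) ^ 2)]
  rw [div_le_iff₀ (by positivity)]
  have h := Real.one_le_cosh (θf t u)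
  nlinarith [Real.exp_pos (-u ^ 2), mul_nonneg (Real.exp_pos (-u ^ 2)).le
    (mul_nonneg (by linarith : (0:ℝ) ≤ Real.cosh (θf t u) - 1)
      (by linarith : (0:ℝ) ≤ Real.cosh (θf t u) + 1))]

lemma G_tendsto_zero_atTop : Tendsto (Gf t) atTop (𝓝 0) := by
  have hg : Tendsto (fun u : ℝ => Real.exp (-u ^ 2)) atTop (𝓝 0) := by
    have h1 : Tendsto (fun u : ℝ => -u ^ 2) atTop atBot := by
      apply tendsto_neg_atTop_atBot.comp
      exact tendsto_pow_atTop (by norm_num : (2:ℕ) ≠ 0)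
    exact Real.tendsto_exp_atBot.comp h1
  exact squeeze_zero_norm (G_norm_bound t) hg

lemma G_tendsto_zero_atBot : Tendsto (Gf t) atBot (𝓝 0) := by
  have hg : Tendsto (fun u : ℝ => Real.exp (-u ^ 2)) atBot (𝓝 0) := by
    have h1 : Tendsto (fun u : ℝ => -u ^ 2) atBot atBot := by
      apply tendsto_neg_atTop_atBot.comp
      have h2 : Tendsto (fun u : ℝ => (-u) ^ 2) atBot atTop :=
        (tendsto_pow_atTop (n := 2) (by norm_num : (2:ℕ) ≠ 0)).comp tendsto_neg_atBot_atTop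
      exact h2.congr fun u => by ring
    exact Real.tendsto_exp_atBot.comp h1
  exact squeeze_zero_norm (G_norm_bound t) hg

lemma integral_W_zero : ∫ u : ℝ, Wf t u = 0 := by
  have h1 := integral_Iic_of_hasDerivAt_of_tendsto' (a := 0)
    (fun x _ => hasDerivAt_G t x) ((integrable_W t).integrableOn) (G_tendsto_zero_atBot t)
  have h2 := integral_Ioi_of_hasDerivAt_of_tendsto' (a := 0)
    (fun x _ => hasDerivAt_G t x) ((integrable_W t).integrableOn) (G_tendsto_zero_atTop t)
  rw [← intervalIntegral.integral_Iic_add_Ioi (b := 0) ((integrable_W t).integrableOn)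
    ((integrable_W t).integrableOn), h1, h2]
  ring

lemma integrable_g0 : Integrable (g0 t) := by
  apply integrable_of_gaussian_bound (C := 1) (b := 1)
  · exact (continuous_cosh_term t).mul (by continuity)
  · norm_num
  · intro u
    unfold g0
    rw [abs_mul, abs_of_pos (Real.exp_pos _),
      abs_of_pos (by positivity : (0:ℝ) < 1 / Real.cosh (θf t u) ^ 2), one_mul, neg_one_mul]
    exact mul_le_of_le_one_left (Real.exp_pos _).le (inv_cosh_sq_le_one _)

lemma integrable_g1 : Integrable (g1 t) := by
  apply integrable_of_gaussian_bound (C := 1) (b := 1)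
  · exact ((continuous_tanh'.comp (continuous_θ t)).mul (continuous_cosh_term t)).mul
      (by continuity)
  · norm_num
  · intro u
    unfold g1
    rw [abs_mul, abs_mul, abs_of_pos (Real.exp_pos _),
      abs_of_pos (by positivity : (0:ℝ) < 1 / Real.cosh (θf t u) ^ 2), one_mul, neg_one_mul]
    have h1 := abs_tanh_le_one (θf t u)
    have h2 := inv_cosh_sq_le_one (θf t u)
    have h3 : (0:ℝ) < 1 / Real.cosh (θf t u) ^ 2 := by positivity
    have h4 : |Real.tanh (θf t u)| * (1 / Real.cosh (θf t u) ^ 2) ≤ 1 :=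
      mul_le_one₀ h1 h3.le h2
    nlinarith [Real.exp_pos (-u ^ 2)]

lemma integrable_g2 : Integrable (g2 t) := by
  apply integrable_of_gaussian_bound (C := 1) (b := 1/2)
  · exact (continuous_id.mul (continuous_cosh_term t)).mul (by continuity)
  · norm_num
  · intro u
    unfold g2
    rw [abs_mul, abs_mul, abs_of_pos (Real.exp_pos _),
      abs_of_pos (by positivity : (0:ℝ) < 1 / Real.cosh (θf t u) ^ 2), one_mul]
    have h2 := inv_cosh_sq_le_one (θf t u)
    have h3 : (0:ℝ) < 1 / Real.cosh (θf t u) ^ 2 := by positivity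
    calc |u| * (1 / Real.cosh (θf t u) ^ 2) * Real.exp (-u ^ 2)
        ≤ |u| * 1 * Real.exp (-u ^ 2) := by
          apply mul_le_mul_of_nonneg_right _ (Real.exp_pos _).le
          exact mul_le_mul_of_nonneg_left h2 (abs_nonneg u)
      _ = |u| * Real.exp (-u ^ 2) := by ring
      _ ≤ Real.exp (-(1/2) * u ^ 2) := abs_mul_exp_le u

lemma integral_g2_eq (ht : 0 < t) :
    ∫ u : ℝ, g2 t u = -(Real.sqrt t) * ∫ u : ℝ, g1 t u := by
  have hW : ∀ u : ℝ, Wf t u = (-2 * Real.sqrt t) * g1 t u + (-2) * g2 t u := by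
    intro u; unfold Wf g1 g2; ring
  have h0 := integral_W_zero t
  rw [funext hW] at h0
  rw [integral_add (((integrable_g1 t)).const_mul _) ((integrable_g2 t).const_mul _),
    integral_const_mul, integral_const_mul] at h0
  have hs : (0:ℝ) < Real.sqrt t := Real.sqrt_pos.2 ht
  linarith [h0]

lemma integral_Kd_eq (ht : 0 < t) :
    ∫ u : ℝ, Kd t u = (1/2) * ∫ u : ℝ, (1 - Real.tanh (θf t u)) * (1 / Real.cosh (θf t u) ^ 2)
      * Real.exp (-u ^ 2) := by
  have hs : Real.sqrt t ≠ 0 := (Real.sqrt_pos.2 ht).ne'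
  have hK : ∀ u : ℝ, Kd t u = (1/2) * g0 t u + (1/(2 * Real.sqrt t)) * g2 t u := by
    intro u
    unfold Kd g0 g2 θf
    field_simp
  rw [funext hK, integral_add ((integrable_g0 t).const_mul _) ((integrable_g2 t).const_mul _),
    integral_const_mul, integral_const_mul, integral_g2_eq t ht]
  have hsub : ∀ u : ℝ, (1 - Real.tanh (θf t u)) * (1 / Real.cosh (θf t u) ^ 2)
      * Real.exp (-u ^ 2) = g0 t u - g1 t u := by
    intro u; unfold g0 g1; ring
  rw [funext hsub, integral_sub (integrable_g0 t) (integrable_g1 t)]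
  field_simp
  ring

lemma integral_Kd_pos (ht : 0 < t) : 0 < ∫ u : ℝ, Kd t u := by
  rw [integral_Kd_eq t ht]
  have hpos : ∀ u : ℝ, 0 < (1 - Real.tanh (θf t u)) * (1 / Real.cosh (θf t u) ^ 2)
      * Real.exp (-u ^ 2) := by
    intro u
    have h1 := tanh_lt_one' (θf t u)
    have h2 : (0:ℝ) < 1 / Real.cosh (θf t u) ^ 2 := by positivity
    have h3 := Real.exp_pos (-u ^ 2)
    exact mul_pos (mul_pos (by linarith) h2) h3
  have hint : Integrable (fun u : ℝ => (1 - Real.tanh (θf t u)) * (1 / Real.cosh (θf t u) ^ 2)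
      * Real.exp (-u ^ 2)) := by
    have hsub : ∀ u : ℝ, (1 - Real.tanh (θf t u)) * (1 / Real.cosh (θf t u) ^ 2)
        * Real.exp (-u ^ 2) = g0 t u - g1 t u := by
      intro u; unfold g0 g1; ring
    rw [funext hsub]
    exact (integrable_g0 t).sub (integrable_g1 t)
  have h := (integral_pos_iff_support_of_nonneg (fun u => (hpos u).le) hint).2
  apply mul_pos (by norm_num)
  apply h
  have hsupp : Function.support (fun u : ℝ => (1 - Real.tanh (θf t u))
      * (1 / Real.cosh (θf t u) ^ 2) * Real.exp (-u ^ 2)) = Set.univ :=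
    Set.eq_univ_iff_forall.2 fun u => Function.mem_support.2 (hpos u).ne'
  rw [hsupp]
  simp
end IBP


/-- `φ` is continuous on `[0,∞)`, strictly decreasing on `[0,∞)`,
satisfies `φ(0) = 1` (equivalently `φ(t) → 1` as `t → 0⁺`), and `φ(t) → 0` as `t → ∞`. -/
theorem phiGA_properties :
    ContinuousOn phiGA (Set.Ici 0) ∧
    StrictAntiOn phiGA (Set.Ici 0) ∧
    phiGA 0 = 1 ∧
    Filter.Tendsto phiGA (nhdsWithin 0 (Set.Ioi 0)) (nhds 1) ∧
    Filter.Tendsto phiGA Filter.atTop (nhds 0) := by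
  have hpi : (0:ℝ) < Real.sqrt Real.pi := Real.sqrt_pos.2 Real.pi_pos
  have phi0 : phiGA 0 = 1 := by simp [phiGA]
  -- limit at 0+
  have hlim0 : Tendsto phiGA (𝓝[>] (0:ℝ)) (𝓝 1) := by
    have h : Tendsto (fun t => 1 - (Real.sqrt Real.pi)⁻¹ * Jf t) (𝓝[>] (0:ℝ))
        (𝓝 (1 - (Real.sqrt Real.pi)⁻¹ * 0)) :=
      tendsto_const_nhds.sub (tendsto_const_nhds.mul J_tendsto_zero)
    rw [mul_zero, sub_zero] at h
    apply h.congr'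
    filter_upwards [self_mem_nhdsWithin] with x hx
    exact (phi_eq hx).symm
  -- strict monotonicity of J on Ioi 0
  have hJmono : StrictMonoOn Jf (Ioi 0) := by
    apply strictMonoOn_of_deriv_pos (convex_Ioi 0)
    · intro x hx
      exact ((J_hasDerivAt hx).2).continuousAt.continuousWithinAt
    · intro x hx
      rw [interior_Ioi] at hx
      rw [(J_hasDerivAt hx).2.deriv]
      exact integral_Kd_pos x hx
  -- J positive on Ioi 0
  have hJpos : ∀ t : ℝ, 0 < t → 0 < Jf t := by
    intro t ht
    have h2 : 0 ≤ Jf (t/2) := by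
      refine le_of_tendsto J_tendsto_zero ?_
      filter_upwards [Ioo_mem_nhdsGT_of_mem (⟨le_refl (0:ℝ), half_pos ht⟩ : (0:ℝ) ∈ Ico 0 (t/2))]
        with s hs
      exact (hJmono hs.1 (half_pos ht) hs.2).le
    exact lt_of_le_of_lt h2 (hJmono (half_pos ht) ht (by linarith))
  -- strict antitonicity
  have hanti : StrictAntiOn phiGA (Ici 0) := by
    intro x hx y hy hxy
    have hy0 : (0:ℝ) < y := lt_of_le_of_lt hx hxy
    rcases eq_or_lt_of_le (show (0:ℝ) ≤ x from hx) with h | h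
    · rw [← h, phi0, phi_eq hy0]
      have h1 := hJpos y hy0
      nlinarith [inv_pos.2 hpi]
    · rw [phi_eq h, phi_eq hy0]
      have h1 := hJmono h hy0 hxy
      have h2 : (0:ℝ) < (Real.sqrt Real.pi)⁻¹ := inv_pos.2 hpi
      nlinarith
  -- continuity
  have hcont : ContinuousOn phiGA (Ici 0) := by
    intro x hx
    rcases eq_or_lt_of_le (show (0:ℝ) ≤ x from hx) with h | h
    · rw [← h]
      unfold ContinuousWithinAt
      rw [phi0, ← Set.Ioi_union_left, nhdsWithin_union]
      apply Tendsto.sup hlim0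
      rw [nhdsWithin_singleton]
      have := tendsto_pure_nhds phiGA 0
      rwa [phi0] at this
    · apply ContinuousAt.continuousWithinAt
      have heq : ∀ᶠ y in 𝓝 x, (fun t => 1 - (Real.sqrt Real.pi)⁻¹ * Jf t) y = phiGA y := by
        filter_upwards [IsOpen.mem_nhds isOpen_Ioi h] with y hy
        exact (phi_eq hy).symm
      apply ContinuousAt.congr _ heq
      exact continuousAt_const.sub
        (continuousAt_const.mul (J_hasDerivAt h).2.continuousAt)
  -- limit at infinity
  have htop : Tendsto phiGA atTop (𝓝 0) := by
    have h : Tendsto (fun t => 1 - (Real.sqrt Real.pi)⁻¹ * Jf t) atTop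
        (𝓝 (1 - (Real.sqrt Real.pi)⁻¹ * Real.sqrt Real.pi)) :=
      tendsto_const_nhds.sub (tendsto_const_nhds.mul J_tendsto_sqrt_pi)
    rw [inv_mul_cancel₀ hpi.ne', sub_self] at h
    apply h.congr'
    filter_upwards [eventually_gt_atTop (0:ℝ)] with t ht
    exact (phi_eq ht).symm
  exact ⟨hcont, hanti, phi0, hlim0, htop⟩
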